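/- arXiv:2503.14396 — 2 statements merged into one kernel-verified Lean document; each statement's English description precedes it below -/
import Mathlib

section
/- Let E be a real inner product space, let f : E → ℝ be differentiable with L_Θ-Lipschitz gradient and G-Lipschitz, and let γ : [0,1] → E be twice continuously differentiable with ‖γ''(t)‖ ≤ C·‖γ'(0)‖² for all t ∈ [0,1]. Then for every t ∈ [0,1], |f(γ(t)) − f(γ(0)) − t·⟨∇f(γ(0)), γ'(0)⟩| ≤ ((L_Θ + G·C)/2)·t²·‖γ'(0)‖². In particular, f(γ(t)) ≥ f(γ(0)) + t·⟨∇f(γ(0)), γ'(0)⟩ − ((L_Θ + G·C)/2)·t²·‖γ'(0)‖². -/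
open scoped RealInnerProductSpace

/-- Taylor-type bound along a curve for an L-smooth, Lipschitz loss,
with curvature bound ‖γ''(t)‖ ≤ C·‖γ'(0)‖². -/
theorem stmt0 {E : Type*} [NormedAddCommGroup E] [InnerProductSpace ℝ E]
    (f : E → ℝ) (gradf : E → E) (LΘ G C : ℝ)
    (hderiv : ∀ x : E, HasFDerivAt f (innerSL ℝ (gradf x)) x)
    (hgradLip : ∀ x y : E, ‖gradf x - gradf y‖ ≤ LΘ * ‖x - y‖)
    (hfLip : ∀ x y : E, |f x - f y| ≤ G * ‖x - y‖)
    (γ γ' γ'' : ℝ → E)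
    (hγ' : ∀ t ∈ Set.Icc (0:ℝ) 1, HasDerivWithinAt γ (γ' t) (Set.Icc 0 1) t)
    (hγ'' : ∀ t ∈ Set.Icc (0:ℝ) 1, HasDerivWithinAt γ' (γ'' t) (Set.Icc 0 1) t)
    (hγ''cont : ContinuousOn γ'' (Set.Icc 0 1))
    (hcurv : ∀ t ∈ Set.Icc (0:ℝ) 1, ‖γ'' t‖ ≤ C * ‖γ' 0‖ ^ 2) :
    ∀ t ∈ Set.Icc (0:ℝ) 1,
      |f (γ t) - f (γ 0) - t * ⟪gradf (γ 0), γ' 0⟫| ≤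
        ((LΘ + G * C) / 2) * t ^ 2 * ‖γ' 0‖ ^ 2 ∧
      f (γ t) ≥ f (γ 0) + t * ⟪gradf (γ 0), γ' 0⟫
        - ((LΘ + G * C) / 2) * t ^ 2 * ‖γ' 0‖ ^ 2 := by
  intro t ht
  set K : ℝ := C * ‖γ' 0‖ ^ 2 with hKdef
  -- first derivative bound : ‖γ' s - γ' 0‖ ≤ K * s
  have h1 : ∀ s ∈ Set.Icc (0:ℝ) 1, ‖γ' s - γ' 0‖ ≤ K * (s - 0) :=
    norm_image_sub_le_of_norm_deriv_le_segment' hγ''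
      (fun s hs => hcurv s (Set.Ico_subset_Icc_self hs))
  have hab : (0:ℝ) ≤ t := ht.1
  have hsub : Set.Icc (0:ℝ) t ⊆ Set.Icc (0:ℝ) 1 := Set.Icc_subset_Icc le_rfl ht.2
  have hγ'c : ContinuousOn γ' (Set.Icc (0:ℝ) 1) := fun s hs => (hγ'' s hs).continuousWithinAt
  have hγc : ContinuousOn γ (Set.Icc (0:ℝ) 1) := fun s hs => (hγ' s hs).continuousWithinAt
  -- Taylor remainder: ‖γ t - γ 0 - t • γ' 0‖ ≤ K * t ^ 2 / 2
  have h2 : ‖γ t - γ 0 - t • γ' 0‖ ≤ K * t ^ 2 / 2 := by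
    have hFc : ContinuousOn (fun s : ℝ => γ s - γ 0 - s • γ' 0) (Set.Icc 0 1) :=
      (hγc.sub continuousOn_const).sub
        ((continuous_id.smul continuous_const).continuousOn)
    have hFd : ∀ x ∈ Set.Ico (0:ℝ) 1,
        HasDerivWithinAt (fun s : ℝ => γ s - γ 0 - s • γ' 0) (γ' x - γ' 0) (Set.Ici x) x := by
      intro x hx
      have hdl : HasDerivAt (fun s : ℝ => s • γ' 0) (γ' 0) x := by
        simpa using (hasDerivAt_id x).smul_const (γ' 0)
      have hdF : HasDerivWithinAt (fun s : ℝ => γ s - γ 0 - s • γ' 0) (γ' x - γ' 0)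
          (Set.Icc 0 1) x :=
        ((hγ' x (Set.Ico_subset_Icc_self hx)).sub_const _).sub hdl.hasDerivWithinAt
      exact hdF.mono_of_mem_nhdsWithin (Icc_mem_nhdsGE_of_mem hx)
    have hB : ∀ x : ℝ, HasDerivAt (fun s : ℝ => K * s ^ 2 / 2) (K * x) x := by
      intro x
      have h := ((hasDerivAt_pow 2 x).const_mul K).div_const 2
      refine h.congr_deriv ?_
      ring
    have ha0 : ‖γ 0 - γ 0 - (0:ℝ) • γ' 0‖ ≤ K * (0:ℝ) ^ 2 / 2 := by simp
    have := image_norm_le_of_norm_deriv_right_le_deriv_boundary hFc hFd ha0 hB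
      (fun x hx => by simpa using h1 x (Set.Ico_subset_Icc_self hx)) ht
    simpa using this
  -- smoothness along the straight segment
  have hgradc : Continuous gradf := by
    have : LipschitzWith (Real.toNNReal LΘ) gradf := by
      apply LipschitzWith.of_dist_le_mul
      intro x y
      rw [dist_eq_norm, dist_eq_norm]
      exact le_trans (hgradLip x y)
        (mul_le_mul_of_nonneg_right (Real.le_coe_toNNReal LΘ) (norm_nonneg _))
    exact this.continuous
  have hψ : ∀ s : ℝ, HasDerivAt (fun s : ℝ => f (γ 0 + s • γ' 0))
      (⟪gradf (γ 0 + s • γ' 0), γ' 0⟫) s := by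
    intro s
    have hl : HasDerivAt (fun s : ℝ => γ 0 + s • γ' 0) (γ' 0) s := by
      simpa using ((hasDerivAt_id s).smul_const (γ' 0)).const_add (γ 0)
    have h := (hderiv (γ 0 + s • γ' 0)).comp_hasDerivAt s hl
    simp only [innerSL_apply_apply] at h
    exact h
  have hintc : Continuous (fun s : ℝ => (⟪gradf (γ 0 + s • γ' 0), γ' 0⟫ : ℝ)) :=
    (hgradc.comp (continuous_const.add (continuous_id.smul continuous_const))).inner
      continuous_const
  have hFTC2 : (∫ s in (0:ℝ)..t, (⟪gradf (γ 0 + s • γ' 0), γ' 0⟫ : ℝ)) =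
      f (γ 0 + t • γ' 0) - f (γ 0) := by
    have := intervalIntegral.integral_eq_sub_of_hasDerivAt (f' := fun s : ℝ =>
        (⟪gradf (γ 0 + s • γ' 0), γ' 0⟫ : ℝ)) (fun s _ => hψ s)
        ((hintc.intervalIntegrable 0 t))
    simpa using this
  have h3 : |f (γ 0 + t • γ' 0) - f (γ 0) - t * ⟪gradf (γ 0), γ' 0⟫| ≤
      LΘ * ‖γ' 0‖ ^ 2 * t ^ 2 / 2 := by
    have hEq2 : f (γ 0 + t • γ' 0) - f (γ 0) - t * ⟪gradf (γ 0), γ' 0⟫ =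
        ∫ s in (0:ℝ)..t, ((⟪gradf (γ 0 + s • γ' 0), γ' 0⟫ : ℝ) - ⟪gradf (γ 0), γ' 0⟫) := by
      rw [intervalIntegral.integral_sub (hintc.intervalIntegrable 0 t)
        (intervalIntegrable_const), hFTC2, intervalIntegral.integral_const]
      simp [smul_eq_mul]
    rw [hEq2, ← Real.norm_eq_abs]
    calc ‖∫ s in (0:ℝ)..t, ((⟪gradf (γ 0 + s • γ' 0), γ' 0⟫ : ℝ) - ⟪gradf (γ 0), γ' 0⟫)‖
        ≤ ∫ s in (0:ℝ)..t, ‖(⟪gradf (γ 0 + s • γ' 0), γ' 0⟫ : ℝ) - ⟪gradf (γ 0), γ' 0⟫‖ :=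
          intervalIntegral.norm_integral_le_integral_norm hab
      _ ≤ ∫ s in (0:ℝ)..t, LΘ * ‖γ' 0‖ ^ 2 * s := by
          apply intervalIntegral.integral_mono_on hab
          · apply ContinuousOn.intervalIntegrable
            exact ((hintc.sub continuous_const).norm).continuousOn
          · apply ContinuousOn.intervalIntegrable
            exact (continuous_const.mul continuous_id).continuousOn
          · intro s hs
            have hinner : (⟪gradf (γ 0 + s • γ' 0), γ' 0⟫ : ℝ) - ⟪gradf (γ 0), γ' 0⟫ =
                ⟪gradf (γ 0 + s • γ' 0) - gradf (γ 0), γ' 0⟫ := by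
              rw [inner_sub_left]
            rw [Real.norm_eq_abs, hinner]
            calc |(⟪gradf (γ 0 + s • γ' 0) - gradf (γ 0), γ' 0⟫ : ℝ)|
                ≤ ‖gradf (γ 0 + s • γ' 0) - gradf (γ 0)‖ * ‖γ' 0‖ :=
                  abs_real_inner_le_norm _ _
              _ ≤ (LΘ * ‖s • γ' 0‖) * ‖γ' 0‖ := by
                  apply mul_le_mul_of_nonneg_right _ (norm_nonneg _)
                  have := hgradLip (γ 0 + s • γ' 0) (γ 0)
                  simpa using this
              _ = LΘ * ‖γ' 0‖ ^ 2 * s := by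
                  rw [norm_smul, Real.norm_eq_abs, abs_of_nonneg hs.1]
                  ring
      _ = LΘ * ‖γ' 0‖ ^ 2 * t ^ 2 / 2 := by
          rw [intervalIntegral.integral_const_mul, integral_id]; ring
  -- combine
  have hd : ‖γ t - (γ 0 + t • γ' 0)‖ ≤ K * t ^ 2 / 2 := by
    have : γ t - (γ 0 + t • γ' 0) = γ t - γ 0 - t • γ' 0 := by abel
    rw [this]; exact h2
  have hGmul : G * ‖γ t - (γ 0 + t • γ' 0)‖ ≤ G * (K * t ^ 2 / 2) := by
    rcases eq_or_ne (γ' 0) 0 with h0 | h0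
    · have hz : ‖γ' 0‖ = 0 := by rw [h0, norm_zero]
      have hK0 : K = 0 := by rw [hKdef, hz]; ring
      have : ‖γ t - (γ 0 + t • γ' 0)‖ = 0 := by
        refine le_antisymm ?_ (norm_nonneg _)
        rw [hK0] at hd; linarith [hd]
      rw [this, hK0]; simp
    · have hvpos : 0 < ‖γ' 0‖ := norm_pos_iff.mpr h0
      have hG : 0 ≤ G := by
        have h := hfLip (γ' 0) 0
        rw [sub_zero] at h
        nlinarith [abs_nonneg (f (γ' 0) - f 0)]
      exact mul_le_mul_of_nonneg_left hd hG
  have habs : |f (γ t) - f (γ 0) - t * ⟪gradf (γ 0), γ' 0⟫| ≤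
      ((LΘ + G * C) / 2) * t ^ 2 * ‖γ' 0‖ ^ 2 := by
    have hsplit : f (γ t) - f (γ 0) - t * ⟪gradf (γ 0), γ' 0⟫ =
        (f (γ t) - f (γ 0 + t • γ' 0)) +
        (f (γ 0 + t • γ' 0) - f (γ 0) - t * ⟪gradf (γ 0), γ' 0⟫) := by ring
    calc |f (γ t) - f (γ 0) - t * ⟪gradf (γ 0), γ' 0⟫|
        ≤ |f (γ t) - f (γ 0 + t • γ' 0)| +
          |f (γ 0 + t • γ' 0) - f (γ 0) - t * ⟪gradf (γ 0), γ' 0⟫| := by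
          rw [hsplit]; exact abs_add_le _ _
      _ ≤ G * (K * t ^ 2 / 2) + LΘ * ‖γ' 0‖ ^ 2 * t ^ 2 / 2 :=
          add_le_add (le_trans (hfLip _ _) hGmul) h3
      _ = ((LΘ + G * C) / 2) * t ^ 2 * ‖γ' 0‖ ^ 2 := by rw [hKdef]; ring
  refine ⟨habs, ?_⟩
  have := (abs_le.mp habs).1
  linarith
end

section
/- Let E be a real inner product space, let f : E → ℝ be differentiable with L_Θ-Lipschitz gradient and G-Lipschitz, and let γ : [0,1] → E be twice continuously differentiable with ‖γ''(t)‖ ≤ C·‖γ'(0)‖² for all t ∈ [0,1]. Then the average loss along the curve satisfies ∫₀¹ f(γ(t)) dt ≥ f(γ(0)) + (1/2)·⟨∇f(γ(0)), γ'(0)⟩ − ((L_Θ + G·C)/6)·‖γ'(0)‖². -/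
open scoped RealInnerProductSpace
open Set

/-- Descent lemma: a function with `L`-Lipschitz gradient satisfies
`f (x + h) ≥ f x + ⟪∇f x, h⟫ - L/2 * ‖h‖²`. -/
lemma descent_lemma_aux {E : Type*} [NormedAddCommGroup E] [InnerProductSpace ℝ E]
    (f : E → ℝ) (g : E → E) (L : ℝ)
    (hderiv : ∀ x : E, HasFDerivAt f (innerSL ℝ (g x)) x)
    (hLip : ∀ x y : E, ‖g x - g y‖ ≤ L * ‖x - y‖)
    (x h : E) :
    f (x + h) ≥ f x + ⟪g x, h⟫ - L / 2 * ‖h‖ ^ 2 := by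
  set ψ : ℝ → ℝ := fun s => f (x + s • h) - s * ⟪g x, h⟫ + L / 2 * ‖h‖ ^ 2 * s ^ 2 with hψdef
  have hψ : ∀ s : ℝ,
      HasDerivAt ψ (⟪g (x + s • h), h⟫ - ⟪g x, h⟫ + L / 2 * ‖h‖ ^ 2 * (2 * s)) s := by
    intro s
    have hc : HasDerivAt (fun s : ℝ => x + s • h) h s := by
      simpa using ((hasDerivAt_id s).smul_const h).const_add x
    have h1 : HasDerivAt (fun s : ℝ => f (x + s • h)) (⟪g (x + s • h), h⟫) s := by
      have := (hderiv (x + s • h)).comp_hasDerivAt s hc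
      simp at this
      exact this
    have h2 : HasDerivAt (fun s : ℝ => s * ⟪g x, h⟫) (⟪g x, h⟫) s :=
      hasDerivAt_mul_const _
    have h3 : HasDerivAt (fun s : ℝ => L / 2 * ‖h‖ ^ 2 * s ^ 2)
        (L / 2 * ‖h‖ ^ 2 * (2 * s)) s := by
      simpa using ((hasDerivAt_pow 2 s).const_mul (L / 2 * ‖h‖ ^ 2))
    exact (h1.sub h2).add h3
  have hmono : MonotoneOn ψ (Icc (0:ℝ) 1) := by
    apply monotoneOn_of_deriv_nonneg (convex_Icc 0 1)
    · exact (Differentiable.continuous fun s => (hψ s).differentiableAt).continuousOn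
    · intro s _
      exact ((hψ s).differentiableAt).differentiableWithinAt
    · intro s hs
      rw [interior_Icc] at hs
      rw [(hψ s).deriv]
      have hb : ‖g (x + s • h) - g x‖ ≤ L * (s * ‖h‖) := by
        have := hLip (x + s • h) x
        simpa [norm_smul, abs_of_nonneg hs.1.le] using this
      have hinner : ⟪g x, h⟫ - ⟪g (x + s • h), h⟫ ≤ ‖g (x + s • h) - g x‖ * ‖h‖ := by
        have h1 := real_inner_le_norm (g x - g (x + s • h)) h
        rw [inner_sub_left] at h1
        rw [norm_sub_rev]
        linarith
      nlinarith [mul_le_mul_of_nonneg_right hb (norm_nonneg h), norm_nonneg h,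
        norm_nonneg (g (x + s • h) - g x), hs.1.le]
  have h01 : ψ 0 ≤ ψ 1 :=
    hmono (left_mem_Icc.2 zero_le_one) (right_mem_Icc.2 zero_le_one) zero_le_one
  have e0 : ψ 0 = f x := by simp [hψdef]
  have e1 : ψ 1 = f (x + h) - ⟪g x, h⟫ + L / 2 * ‖h‖ ^ 2 := by simp [hψdef]
  rw [e0, e1] at h01
  linarith

/-- Lower bound on the average loss along a curve in terms of the initial
value, the initial directional derivative, and the curvature/smoothness constants. -/
theorem stmt2 {E : Type*} [NormedAddCommGroup E] [InnerProductSpace ℝ E]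
    (f : E → ℝ) (gradf : E → E) (LΘ G C : ℝ)
    (hderiv : ∀ x : E, HasFDerivAt f (innerSL ℝ (gradf x)) x)
    (hgradLip : ∀ x y : E, ‖gradf x - gradf y‖ ≤ LΘ * ‖x - y‖)
    (hfLip : ∀ x y : E, |f x - f y| ≤ G * ‖x - y‖)
    (γ γ' γ'' : ℝ → E)
    (hγ' : ∀ t ∈ Set.Icc (0:ℝ) 1, HasDerivWithinAt γ (γ' t) (Set.Icc 0 1) t)
    (hγ'' : ∀ t ∈ Set.Icc (0:ℝ) 1, HasDerivWithinAt γ' (γ'' t) (Set.Icc 0 1) t)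
    (hγ''cont : ContinuousOn γ'' (Set.Icc 0 1))
    (hcurv : ∀ t ∈ Set.Icc (0:ℝ) 1, ‖γ'' t‖ ≤ C * ‖γ' 0‖ ^ 2) :
    ∫ t in (0:ℝ)..1, f (γ t) ≥
      f (γ 0) + (1 / 2) * ⟪gradf (γ 0), γ' 0⟫ - ((LΘ + G * C) / 6) * ‖γ' 0‖ ^ 2 := by
  rcases subsingleton_or_nontrivial E with hE | hE
  · have h0 : γ' 0 = 0 := Subsingleton.elim _ _
    have hγc : ∀ t : ℝ, γ t = γ 0 := fun t => Subsingleton.elim _ _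
    have hI : ∫ t in (0:ℝ)..1, f (γ t) = f (γ 0) := by
      simp [hγc]
    rw [hI, h0]
    simp
  · -- nonnegativity of the Lipschitz constants
    obtain ⟨x₀, y₀, hxy⟩ := exists_pair_ne E
    have hnorm : 0 < ‖x₀ - y₀‖ := norm_pos_iff.mpr (sub_ne_zero.mpr hxy)
    have hG : 0 ≤ G := by nlinarith [hfLip x₀ y₀, abs_nonneg (f x₀ - f y₀)]
    have hL : 0 ≤ LΘ := by nlinarith [hgradLip x₀ y₀, norm_nonneg (gradf x₀ - gradf y₀)]
    set v : ℝ := ‖γ' 0‖ with hv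
    set K : ℝ := C * v ^ 2 with hK
    have h0mem : (0:ℝ) ∈ Icc (0:ℝ) 1 := left_mem_Icc.2 zero_le_one
    have hγcont : ContinuousOn γ (Icc (0:ℝ) 1) := fun t ht =>
      (hγ' t ht).continuousWithinAt
    have hγ'cont : ContinuousOn γ' (Icc (0:ℝ) 1) := fun t ht =>
      (hγ'' t ht).continuousWithinAt
    -- first-order bound on γ'
    have hγ'lip : ∀ s ∈ Icc (0:ℝ) 1, ‖γ' s - γ' 0‖ ≤ K * s := by
      intro s hs
      have := Convex.norm_image_sub_le_of_norm_hasDerivWithin_le hγ'' hcurv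
        (convex_Icc 0 1) h0mem hs
      simpa [Real.norm_eq_abs, abs_of_nonneg hs.1] using this
    -- Taylor remainder bound
    set δ : ℝ → E := fun s => γ s - γ 0 - s • γ' 0 with hδ
    have hδcont : ContinuousOn δ (Icc (0:ℝ) 1) :=
      (hγcont.sub continuousOn_const).sub
        ((continuous_id.smul continuous_const).continuousOn)
    have hδderiv : ∀ s ∈ Ico (0:ℝ) 1, HasDerivWithinAt δ (γ' s - γ' 0) (Ici s) s := by
      intro s hs
      have h1 : HasDerivWithinAt δ (γ' s - γ' 0) (Icc (0:ℝ) 1) s := by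
        have h2 : HasDerivWithinAt (fun s : ℝ => s • γ' 0) (γ' 0) (Icc (0:ℝ) 1) s := by
          simpa using (hasDerivWithinAt_id s (Icc (0:ℝ) 1)).smul_const (γ' 0)
        exact ((hγ' s (Ico_subset_Icc_self hs)).sub_const _).sub h2
      exact h1.mono_of_mem_nhdsWithin (Icc_mem_nhdsGE_of_mem ⟨hs.1, hs.2⟩)
    have hδA : ∀ t ∈ Icc (0:ℝ) 1, ‖δ t‖ ≤ K / 2 * t ^ 2 := by
      have hB : ∀ s : ℝ, HasDerivAt (fun s : ℝ => K / 2 * s ^ 2) (K * s) s := by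
        intro s
        have := (hasDerivAt_pow 2 s).const_mul (K / 2)
        exact this.congr_deriv (by ring)
      have ha : ‖δ 0‖ ≤ K / 2 * (0:ℝ) ^ 2 := by simp [hδ]
      intro t ht
      exact image_norm_le_of_norm_deriv_right_le_deriv_boundary hδcont hδderiv ha hB
        (fun s hs => hγ'lip s (Ico_subset_Icc_self hs)) ht
    -- pointwise lower bound
    have hpt : ∀ t ∈ Icc (0:ℝ) 1,
        f (γ 0) + ⟪gradf (γ 0), γ' 0⟫ * t - ((LΘ + G * C) / 2 * v ^ 2) * t ^ 2
          ≤ f (γ t) := by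
      intro t ht
      have hA := hδA t ht
      have hδeq : γ t - (γ 0 + t • γ' 0) = δ t := by
        simp [hδ, sub_sub]
      have habs : f (γ 0 + t • γ' 0) - f (γ t) ≤ G * ‖δ t‖ := by
        have h1 := hfLip (γ 0 + t • γ' 0) (γ t)
        rw [norm_sub_rev, hδeq] at h1
        exact (le_abs_self _).trans h1
      have hGb : G * ‖δ t‖ ≤ G * (K / 2 * t ^ 2) := mul_le_mul_of_nonneg_left hA hG
      have hdesc := descent_lemma_aux f gradf LΘ hderiv hgradLip (γ 0) (t • γ' 0)
      have hs1 : ⟪gradf (γ 0), t • γ' 0⟫ = t * ⟪gradf (γ 0), γ' 0⟫ :=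
        real_inner_smul_right _ _ _
      have hs2 : ‖t • γ' 0‖ ^ 2 = t ^ 2 * v ^ 2 := by
        rw [norm_smul, Real.norm_eq_abs, mul_pow, sq_abs, hv]
      rw [hs1, hs2] at hdesc
      rw [hK] at hGb
      nlinarith [hdesc, habs, hGb]
    -- integrate
    have hfc : Continuous f := by
      apply continuous_iff_continuousAt.mpr
      intro x
      exact (hderiv x).continuousAt
    have hint1 : IntervalIntegrable (fun t => f (γ t)) MeasureTheory.volume 0 1 := by
      apply ContinuousOn.intervalIntegrable
      rw [uIcc_of_le zero_le_one]
      exact hfc.comp_continuousOn hγcont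
    have hint2 : IntervalIntegrable
        (fun t : ℝ => f (γ 0) + ⟪gradf (γ 0), γ' 0⟫ * t
          - ((LΘ + G * C) / 2 * v ^ 2) * t ^ 2) MeasureTheory.volume 0 1 := by
      apply Continuous.intervalIntegrable
      fun_prop
    have hmono := intervalIntegral.integral_mono_on zero_le_one hint2 hint1 hpt
    have hcalc : ∫ t in (0:ℝ)..1,
        (f (γ 0) + ⟪gradf (γ 0), γ' 0⟫ * t - ((LΘ + G * C) / 2 * v ^ 2) * t ^ 2)
        = f (γ 0) + (1 / 2) * ⟪gradf (γ 0), γ' 0⟫ - ((LΘ + G * C) / 6) * v ^ 2 := by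
      have i1 : IntervalIntegrable (fun _ : ℝ => f (γ 0)) MeasureTheory.volume 0 1 :=
        intervalIntegrable_const
      have i2 : IntervalIntegrable (fun t : ℝ => ⟪gradf (γ 0), γ' 0⟫ * t)
          MeasureTheory.volume 0 1 := by
        apply Continuous.intervalIntegrable; fun_prop
      have i3 : IntervalIntegrable (fun t : ℝ => ((LΘ + G * C) / 2 * v ^ 2) * t ^ 2)
          MeasureTheory.volume 0 1 := by
        apply Continuous.intervalIntegrable; fun_prop
      rw [intervalIntegral.integral_sub (i1.add i2) i3,
        intervalIntegral.integral_add i1 i2, intervalIntegral.integral_const_mul,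
        intervalIntegral.integral_const_mul]
      simp [integral_pow]
      ring
    rw [hcalc] at hmono
    exact hmono
end
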